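/- Let p be an odd positive integer and let G be a graph of order p+3 not containing B_p with exactly (p+1)(p+3)/2 edges. Then G is isomorphic to K_{p+3} minus a perfect matching. -/

import Mathlib

open SimpleGraph

/-- A graph contains the book `B_p` iff some edge has at least `p` common neighbors. -/
def SimpleGraph.ContainsBook {V : Type*} (G : SimpleGraph V) (p : ℕ) : Prop :=
  ∃ x y, G.Adj x y ∧ p ≤ (G.commonNeighbors x y).ncard

/-- The Turán number `ex(n, B_p)`: the maximum number of edges of a simple graph
on `n` vertices containing no book `B_p`. -/
noncomputable def bookTuranNumber (n p : ℕ) : ℕ :=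
  sSup {e : ℕ | ∃ G : SimpleGraph (Fin n), ¬ G.ContainsBook p ∧ G.edgeSet.ncard = e}

/-- The disjoint union of `m` copies of the complete graph `K_k`. -/
def unionComplete (m k : ℕ) : SimpleGraph (Fin m × Fin k) :=
  SimpleGraph.fromRel fun a b => a.1 = b.1

/-- The join `G ∨ H` of two graphs. -/
def SimpleGraph.join {α β : Type*} (G : SimpleGraph α) (H : SimpleGraph β) :
    SimpleGraph (α ⊕ β) := (Gᶜ ⊕g Hᶜ)ᶜ

/-- A disjoint union of cycles `C_{i 0} + ⋯ + C_{i (t-1)}`. -/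
def cycleFamily (t : ℕ) (i : Fin t → ℕ) : SimpleGraph (Σ j : Fin t, Fin (i j)) :=
  SimpleGraph.fromRel fun a b => ∃ h : a.1 = b.1, (SimpleGraph.cycleGraph (i b.1)).Adj (h ▸ a.2) b.2

theorem stmt9 (p : ℕ) (hp : 1 ≤ p) (hodd : Odd p) {V : Type*} [Fintype V]
    (hV : Fintype.card V = p + 3) (G : SimpleGraph V) (hfree : ¬ G.ContainsBook p)
    (hsize : G.edgeSet.ncard = (p + 1) * (p + 3) / 2) :
    Nonempty (G ≃g (unionComplete ((p + 3) / 2) 2)ᶜ) := by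
  classical
  haveI : DecidableRel G.Adj := Classical.decRel _
  have hedges : G.edgeFinset.card = (p + 1) * (p + 3) / 2 := by
    rw [← hsize, ← Set.ncard_coe_finset, coe_edgeFinset]
  have heven : Even ((p + 1) * (p + 3)) := by
    have h3 : Odd (3 : ℕ) := by decide
    exact (hodd.add_odd h3).mul_left _
  have hsum : ∑ v, G.degree v = (p + 1) * (p + 3) := by
    rw [G.sum_degrees_eq_twice_card_edges, hedges, Nat.mul_div_cancel' heven.two_dvd]
  -- Step A: all degrees ≤ p+1
  have hdegle : ∀ v, G.degree v ≤ p + 1 := by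
    intro v
    by_contra hc
    push_neg at hc
    have hlt : G.degree v < p + 3 := by
      have := G.degree_lt_card_verts v; rwa [hV] at this
    -- v is adjacent to all other vertices
    have hadj : ∀ w, w ≠ v → G.Adj v w := by
      intro w hw
      by_contra hna
      have hsub : G.neighborFinset v ⊆ (Finset.univ.erase v).erase w := by
        intro x hx
        rw [mem_neighborFinset] at hx
        refine Finset.mem_erase.2 ⟨?_, Finset.mem_erase.2 ⟨?_, Finset.mem_univ x⟩⟩
        · rintro rfl; exact hna hx
        · rintro rfl; exact G.irrefl hx
      have hcard := Finset.card_le_card hsub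
      rw [card_neighborFinset_eq_degree] at hcard
      have h1 : ((Finset.univ.erase v).erase w).card ≤ (Finset.univ : Finset V).card - 2 := by
        rw [Finset.card_erase_of_mem (Finset.mem_erase.2 ⟨hw, Finset.mem_univ w⟩),
          Finset.card_erase_of_mem (Finset.mem_univ v)]
        omega
      rw [Finset.card_univ, hV] at h1
      omega
    -- every other vertex has degree ≤ p
    have hdy : ∀ y, y ≠ v → G.degree y ≤ p := by
      intro y hy
      have hvy : G.Adj v y := hadj y hy
      have hkey : ¬ p ≤ (G.commonNeighbors v y).ncard := fun hh => hfree ⟨v, y, hvy, hh⟩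
      have hsub : (((G.neighborFinset y).erase v : Finset V) : Set V) ⊆
          G.commonNeighbors v y := by
        intro x hx
        simp only [Finset.coe_erase, Set.mem_diff, Finset.mem_coe, mem_neighborFinset,
          Set.mem_singleton_iff] at hx
        exact ⟨hadj x hx.2, hx.1⟩
      have hle : ((G.neighborFinset y).erase v).card ≤ (G.commonNeighbors v y).ncard := by
        have := Set.ncard_le_ncard hsub (Set.toFinite _)
        rwa [Set.ncard_coe_finset] at this
      have hvmem : v ∈ G.neighborFinset y := by
        rw [mem_neighborFinset]; exact hvy.symm
      rw [Finset.card_erase_of_mem hvmem, card_neighborFinset_eq_degree] at hle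
      have hpos : 1 ≤ G.degree y := by
        rw [← card_neighborFinset_eq_degree]
        exact Finset.card_pos.2 ⟨v, hvmem⟩
      omega
    have hbound : ∑ w, G.degree w ≤ (p + 3) + (p + 2) * p := by
      rw [← Finset.add_sum_erase _ _ (Finset.mem_univ v)]
      have h1 : ∑ w ∈ Finset.univ.erase v, G.degree w ≤ (Finset.univ.erase v).card * p :=
        Finset.sum_le_card_nsmul _ _ _ (fun w hw => hdy w (Finset.mem_erase.1 hw).1)
      have h2 : (Finset.univ.erase v).card = p + 2 := by
        rw [Finset.card_erase_of_mem (Finset.mem_univ v), Finset.card_univ, hV]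
        omega
      rw [h2] at h1
      omega
    rw [hsum] at hbound
    nlinarith
  -- Step B: all degrees = p+1
  have hdeg : ∀ v, G.degree v = p + 1 := by
    intro v
    by_contra hne
    have hlt : G.degree v < p + 1 := lt_of_le_of_ne (hdegle v) hne
    have hsl : ∑ w, G.degree w < ∑ _w : V, (p + 1) :=
      Finset.sum_lt_sum (fun w _ => hdegle w) ⟨v, Finset.mem_univ v, hlt⟩
    rw [hsum, Finset.sum_const, Finset.card_univ, hV, smul_eq_mul,
      mul_comm (p + 3) (p + 1)] at hsl
    omega
  -- Step C: complement has degree 1 everywhere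
  have hcdeg : ∀ v, Gᶜ.degree v = 1 := by
    intro v
    rw [degree_compl, hdeg, hV]
    omega
  have hex : ∀ v, ∃! w, Gᶜ.Adj v w := by
    intro v
    obtain ⟨a, ha⟩ := Finset.card_eq_one.mp (hcdeg v)
    refine ⟨a, ?_, ?_⟩
    · have hm : a ∈ Gᶜ.neighborFinset v := ha ▸ Finset.mem_singleton_self a
      rwa [mem_neighborFinset] at hm
    · intro y hy
      have hm : y ∈ Gᶜ.neighborFinset v := by rw [mem_neighborFinset]; exact hy
      rw [ha, Finset.mem_singleton] at hm
      exact hm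
  choose f hf using hex
  have hfadj : ∀ v, Gᶜ.Adj v (f v) := fun v => (hf v).1
  have huniq : ∀ v y, Gᶜ.Adj v y → y = f v := fun v y h => (hf v).2 y h
  have hfne : ∀ v, f v ≠ v := fun v h => Gᶜ.irrefl (h ▸ hfadj v)
  have hff : ∀ v, f (f v) = v := fun v => (huniq (f v) v (hfadj v).symm).symm
  -- adjacency characterization
  have hGadj : ∀ a b, G.Adj a b ↔ ¬ (a = b ∨ f a = b) := by
    intro a b
    constructor
    · intro h
      rintro (rfl | rfl)
      · exact G.irrefl h
      · exact (hfadj a).2 h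
    · intro h
      push_neg at h
      by_contra hna
      exact h.2 (huniq a b ⟨h.1, hna⟩).symm
  -- the pairing setoid
  have requiv : Equivalence (fun a b => a = b ∨ f a = b) := by
    refine ⟨fun a => Or.inl rfl, ?_, ?_⟩
    · rintro a b (rfl | rfl)
      · exact Or.inl rfl
      · exact Or.inr (hff a)
    · rintro a b c (rfl | rfl) (h2 | h2)
      · exact Or.inl h2
      · exact Or.inr h2
      · exact Or.inr h2
      · exact Or.inl ((hff a).symm.trans h2)
  let s : Setoid V := ⟨_, requiv⟩
  haveI : DecidableEq (Quotient s) := Classical.decEq _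
  haveI : Fintype (Quotient s) :=
    Fintype.ofSurjective (Quotient.mk s) (fun q => ⟨q.out, q.out_eq⟩)
  have hout : ∀ v : V, (Quotient.mk s v).out = v ∨ f ((Quotient.mk s v).out) = v := by
    intro v
    exact Quotient.exact (Quotient.out_eq (Quotient.mk s v))
  let g : V → Quotient s × Fin 2 :=
    fun v => (Quotient.mk s v, if v = (Quotient.mk s v).out then 0 else 1)
  let h : Quotient s × Fin 2 → V := fun x => if x.2 = 0 then x.1.out else f x.1.out
  have hgh : ∀ v, h (g v) = v := by
    intro v
    simp only [g, h]
    by_cases hc : v = (Quotient.mk s v).out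
    · rw [if_pos hc, if_pos rfl]
      exact hc.symm
    · rw [if_neg hc, if_neg (by decide : ¬ (1 : Fin 2) = 0)]
      rcases hout v with h1 | h1
      · exact absurd h1.symm hc
      · exact h1
  have hhg : ∀ x : Quotient s × Fin 2, g (h x) = x := by
    rintro ⟨q, i⟩
    by_cases hi : i = 0
    · subst hi
      simp [g, h, Quotient.out_eq]
    · have hi1 : i = 1 := Fin.eq_one_of_ne_zero i hi
      subst hi1
      simp only [g, h]
      rw [if_neg (by decide : ¬ (1 : Fin 2) = 0)]
      have h1 : Quotient.mk s (f q.out) = q := by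
        have hr : f (f q.out) = q.out := hff q.out
        have h2 : Quotient.mk s (f q.out) = Quotient.mk s q.out :=
          Quotient.sound (Or.inr hr)
        exact h2.trans (Quotient.out_eq q)
      have h2 : ¬ (f q.out = (Quotient.mk s (f q.out)).out) := by
        rw [h1]
        exact hfne q.out
      rw [if_neg h2, h1]
  let e : V ≃ Quotient s × Fin 2 := ⟨g, h, hgh, hhg⟩
  have hcardQ : Fintype.card (Quotient s) = (p + 3) / 2 := by
    have h1 : Fintype.card V = Fintype.card (Quotient s) * 2 := by
      rw [Fintype.card_congr e, Fintype.card_prod, Fintype.card_fin]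
    rw [hV] at h1
    omega
  let eQ : Quotient s ≃ Fin ((p + 3) / 2) := Fintype.equivFinOfCardEq hcardQ
  let E : V ≃ Fin ((p + 3) / 2) × Fin 2 := e.trans (eQ.prodCongr (Equiv.refl (Fin 2)))
  refine ⟨⟨E, ?_⟩⟩
  intro a b
  have hfst : (E a).1 = (E b).1 ↔ (a = b ∨ f a = b) := by
    constructor
    · intro h
      have h2 : (e a).1 = (e b).1 := eQ.injective h
      exact Quotient.exact h2
    · intro h
      have h2 : (e a).1 = (e b).1 := Quotient.sound h
      show eQ (e a).1 = eQ (e b).1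
      rw [h2]
  have hEne : E a = E b ↔ a = b := E.apply_eq_iff_eq
  constructor
  · intro h
    rw [compl_adj] at h
    obtain ⟨hne, hnadj⟩ := h
    rw [hGadj]
    rintro (rfl | hfab)
    · exact hne rfl
    · apply hnadj
      rw [unionComplete, SimpleGraph.fromRel_adj]
      exact ⟨hne, Or.inl (hfst.2 (Or.inr hfab))⟩
  · intro h
    have hne : ¬ (a = b ∨ f a = b) := (hGadj a b).1 h
    rw [compl_adj]
    constructor
    · exact fun he => hne (Or.inl (hEne.1 he))
    · rw [unionComplete, SimpleGraph.fromRel_adj]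
      rintro ⟨-, (h1 | h1)⟩
      · exact hne (hfst.1 h1)
      · exact hne (hfst.1 h1.symm)
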